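/- Let Δ be a finite-dimensional central division algebra over a field F, V a finite-dimensional right Δ-vector space, and E = F[t]/(p(t)) a finite field extension of F with Δ ⊗_F E ≅ Mat_c(Δ') for a central division E-algebra Δ'. Then an F-algebra embedding of E into End_Δ(V) exists if and only if V admits the structure of a right Δ ⊗_F E-module extending its Δ-module structure, and this holds if and only if dim_F V / (c · [Δ' : F]) is a positive integer; equivalently, [E:F] divides n·c, where n = dim_Δ V. -/

import Mathlib

open Polynomial TensorProduct

section Aux
variable {c : ℕ} {D : Type} [DivisionRing D]

/-- The module structure on column vectors over a matrix ring (entries may be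
noncommutative), given by `Matrix.mulVec`. -/
def mulVecModule : Module (Matrix (Fin c) (Fin c) D) (Fin c → D) where
  smul M v := M.mulVec v
  one_smul v := Matrix.one_mulVec v
  mul_smul M N v := (Matrix.mulVec_mulVec v M N).symm
  smul_zero M := Matrix.mulVec_zero M
  smul_add M x y := Matrix.mulVec_add M x y
  add_smul M N v := Matrix.add_mulVec M N v
  zero_smul v := Matrix.zero_mulVec v

lemma stdB_mul_scalar (i j : Fin c) (x : D) :
    Matrix.single i j (1:D) * Matrix.scalar (Fin c) x
      = Matrix.scalar (Fin c) x * Matrix.single i j 1 := by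
  have hs : Matrix.scalar (Fin c) x = Matrix.diagonal (fun _ => x) := rfl
  ext a b
  rw [hs]
  simp [Matrix.mul_diagonal, Matrix.diagonal_mul, Matrix.single]

lemma sum_stdB_diag : ∑ i : Fin c, Matrix.single i i (1:D) = 1 := by
  ext a b
  rw [Matrix.sum_apply]
  by_cases h : a = b
  · subst h
    rw [Matrix.one_apply_eq, Finset.sum_eq_single a]
    · simp [Matrix.single]
    · intro i _ hi; simp [Matrix.single, hi]
    · simp
  · rw [Matrix.one_apply_ne h]
    apply Finset.sum_eq_zero
    intro i _
    simp only [Matrix.single, Matrix.of_apply, ite_eq_right_iff, and_imp]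
    rintro rfl rfl; exact absurd rfl h

end Aux

set_option maxHeartbeats 1600000 in
/-- Proof of Lemma 7, in detail: let `Δ` be a finite-dimensional central division
`F`-algebra, `V` a finite-dimensional `Δ`-vector space of dimension `n ≥ 1`, `E/F` a finite
field extension, and `E ⊗_F Δ ≅ Mat_c(Δ')` with `Δ'` a central division `E`-algebra (so `c`
is the capacity). Then the following are equivalent:
an `F`-algebra embedding of `E` into `End_Δ(V)` exists; `V` admits an `(E ⊗_F Δ)`-module
structure extending its `Δ`-module structure; `dim_F V / (c · [Δ' : F])` is a positive
integer; and `[E : F] ∣ n · c`. -/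
theorem embedding_iff_module_iff_dim_dvd
    (F Δ V E : Type) [Field F] [DivisionRing Δ] [Algebra F Δ]
    [FiniteDimensional F Δ] [Algebra.IsCentral F Δ]
    [AddCommGroup V] [Module Δ V] [Module F V] [IsScalarTower F Δ V]
    [SMulCommClass Δ F V] [FiniteDimensional Δ V]
    [Field E] [Algebra F E] [FiniteDimensional F E]
    (n : ℕ) (hn : n = Module.finrank Δ V) (hnpos : 0 < n)
    (c : ℕ) (Δ' : Type) [DivisionRing Δ'] [Algebra E Δ'] [Algebra.IsCentral E Δ']
    [Algebra F Δ'] [IsScalarTower F E Δ']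
    (iso : (E ⊗[F] Δ) ≃ₐ[E] Matrix (Fin c) (Fin c) Δ') :
    ((∃ ρ : E →ₐ[F] Module.End Δ V, Function.Injective ρ) ↔
        (∃ inst : Module (E ⊗[F] Δ) V, ∀ (δ : Δ) (v : V),
          (letI := inst; ((1 : E) ⊗ₜ[F] δ) • v) = δ • v)) ∧
    ((∃ inst : Module (E ⊗[F] Δ) V, ∀ (δ : Δ) (v : V),
          (letI := inst; ((1 : E) ⊗ₜ[F] δ) • v) = δ • v) ↔
        (∃ k : ℕ, 0 < k ∧ Module.finrank F V = k * (c * Module.finrank F Δ'))) ∧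
    ((∃ k : ℕ, 0 < k ∧ Module.finrank F V = k * (c * Module.finrank F Δ')) ↔
        Module.finrank F E ∣ n * c) := by
  -- notation
  have hd : 0 < Module.finrank F Δ := Module.finrank_pos
  have he : 0 < Module.finrank F E := Module.finrank_pos
  haveI : Nontrivial V := Module.finrank_pos_iff.mp (hn ▸ hnpos)
  haveI : Module.Finite F V := Module.Finite.trans Δ V
  have hV : Module.finrank F Δ * Module.finrank Δ V = Module.finrank F V :=
    Module.finrank_mul_finrank F Δ V
  have hdn : Module.finrank F V = Module.finrank F Δ * n := by
    rw [hn]; exact hV.symm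
  have hVpos : 0 < Module.finrank F V := by
    rw [hdn]; exact Nat.mul_pos hd hnpos
  -- the F-linear equivalence underlying iso
  let isoF : (E ⊗[F] Δ) ≃ₗ[F] Matrix (Fin c) (Fin c) Δ' :=
    iso.toLinearEquiv.restrictScalars F
  have hA : Module.finrank F (E ⊗[F] Δ) = Module.finrank F E * Module.finrank F Δ :=
    Module.finrank_tensorProduct
  haveI : Nontrivial (E ⊗[F] Δ) := by
    refine Module.finrank_pos_iff (R := F) |>.mp ?_
    rw [hA]; exact Nat.mul_pos he hd
  haveI : Module.Finite F (Matrix (Fin c) (Fin c) Δ') := Module.Finite.equiv isoF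
  haveI : Nontrivial (Matrix (Fin c) (Fin c) Δ') := isoF.symm.toEquiv.nontrivial
  have hc : 0 < c := by
    rcases Nat.eq_zero_or_pos c with h | h
    · subst h
      haveI : IsEmpty (Fin 0) := inferInstance
      exact absurd (Subsingleton.elim (0 : Matrix (Fin 0) (Fin 0) Δ') 1)
        (by intro hs; exact zero_ne_one hs)
    · exact h
  haveI : FiniteDimensional F Δ' := by
    refine Module.Finite.of_surjective
      (⟨⟨fun M : Matrix (Fin c) (Fin c) Δ' => M ⟨0, hc⟩ ⟨0, hc⟩, fun a b => rfl⟩,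
        fun a b => rfl⟩ : Matrix (Fin c) (Fin c) Δ' →ₗ[F] Δ') ?_
    intro x; exact ⟨Matrix.single ⟨0,hc⟩ ⟨0,hc⟩ x, by
      show (Matrix.single (⟨0,hc⟩ : Fin c) (⟨0,hc⟩ : Fin c) x) ⟨0,hc⟩ ⟨0,hc⟩ = x; simp [Matrix.single]⟩
  have key : Module.finrank F E * Module.finrank F Δ = c * (c * Module.finrank F Δ') := by
    rw [← hA, isoF.finrank_eq, Module.finrank_matrix, Fintype.card_fin, mul_assoc]
  have hd' : 0 < Module.finrank F Δ' := by
    rcases Nat.eq_zero_or_pos (Module.finrank F Δ') with h | h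
    · exfalso; rw [h, mul_zero, mul_zero] at key
      exact Nat.lt_irrefl 0 (key ▸ Nat.mul_pos he hd)
    · exact h
  -- the arithmetic equivalence (third iff)
  have p3p4 : (∃ k : ℕ, 0 < k ∧ Module.finrank F V = k * (c * Module.finrank F Δ')) →
      Module.finrank F E ∣ n * c := by
    rintro ⟨k, -, hdim⟩
    have h1 : (n * c) * Module.finrank F Δ = (k * Module.finrank F E) * Module.finrank F Δ := by
      calc (n * c) * Module.finrank F Δ
          = (Module.finrank F Δ * n) * c := by ring
        _ = (k * (c * Module.finrank F Δ')) * c := by rw [← hdn, hdim]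
        _ = k * (c * (c * Module.finrank F Δ')) := by ring
        _ = k * (Module.finrank F E * Module.finrank F Δ) := by rw [← key]
        _ = (k * Module.finrank F E) * Module.finrank F Δ := by ring
    have h2 : n * c = k * Module.finrank F E := Nat.eq_of_mul_eq_mul_right hd h1
    exact ⟨k, by rw [h2, mul_comm]⟩
  have p4p3 : Module.finrank F E ∣ n * c →
      (∃ k : ℕ, 0 < k ∧ Module.finrank F V = k * (c * Module.finrank F Δ')) := by
    rintro ⟨k, hk⟩
    have hkpos : 0 < k := by
      rcases Nat.eq_zero_or_pos k with h | h
      · exfalso; rw [h, mul_zero] at hk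
        exact Nat.lt_irrefl 0 (hk ▸ Nat.mul_pos hnpos hc)
      · exact h
    refine ⟨k, hkpos, ?_⟩
    have h1 : Module.finrank F V * c = (k * (c * Module.finrank F Δ')) * c := by
      calc Module.finrank F V * c = Module.finrank F Δ * (n * c) := by rw [hdn]; ring
        _ = Module.finrank F Δ * (Module.finrank F E * k) := by rw [hk]
        _ = (Module.finrank F E * Module.finrank F Δ) * k := by ring
        _ = (c * (c * Module.finrank F Δ')) * k := by rw [key]
        _ = (k * (c * Module.finrank F Δ')) * c := by ring
    exact Nat.eq_of_mul_eq_mul_right hc h1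
  have p2p1 : (∃ inst : Module (E ⊗[F] Δ) V, ∀ (δ : Δ) (v : V),
      (letI := inst; ((1 : E) ⊗ₜ[F] δ) • v) = δ • v) →
      (∃ ρ : E →ₐ[F] Module.End Δ V, Function.Injective ρ) := by
    rintro ⟨inst, hcompat0⟩
    letI := inst
    have hcompat : ∀ (δ : Δ) (v : V), ((1 : E) ⊗ₜ[F] δ) • v = δ • v := hcompat0
    have hfull : ∀ (a : F) (v : V), (algebraMap F (E ⊗[F] Δ) a) • v = a • v := by
      intro a v
      have h1 : (algebraMap F (E ⊗[F] Δ) a) = (1:E) ⊗ₜ[F] (algebraMap F Δ a) := by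
        rw [Algebra.TensorProduct.algebraMap_apply, Algebra.algebraMap_eq_smul_one,
          TensorProduct.smul_tmul, ← Algebra.algebraMap_eq_smul_one]
      rw [h1, hcompat, algebraMap_smul]
    have hmix : ∀ (x : E) (δ : Δ) (v : V), (x ⊗ₜ[F] (1:Δ)) • (δ • v) = (x ⊗ₜ[F] δ) • v := by
      intro x δ v
      rw [← hcompat δ v, ← mul_smul, Algebra.TensorProduct.tmul_mul_tmul, mul_one, one_mul]
    have hmix2 : ∀ (x : E) (δ : Δ) (v : V), δ • ((x ⊗ₜ[F] (1:Δ)) • v) = (x ⊗ₜ[F] δ) • v := by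
      intro x δ v
      rw [← hcompat δ ((x ⊗ₜ[F] (1:Δ)) • v), ← mul_smul, Algebra.TensorProduct.tmul_mul_tmul,
        mul_one, one_mul]
    let ρf : E → Module.End Δ V := fun x =>
      { toFun := fun v => (x ⊗ₜ[F] (1:Δ)) • v
        map_add' := fun u v => smul_add _ u v
        map_smul' := fun δ v => by
          simp only [RingHom.id_apply]
          rw [hmix, hmix2] }
    have happ : ∀ (x : E) (v : V), ρf x v = (x ⊗ₜ[F] (1:Δ)) • v := fun _ _ => rfl
    let ρ : E →ₐ[F] Module.End Δ V :=
      { toFun := ρf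
        map_one' := by
          apply LinearMap.ext; intro v
          rw [happ, ← Algebra.TensorProduct.one_def, one_smul]; rfl
        map_mul' := fun x y => by
          apply LinearMap.ext; intro v
          show ρf (x*y) v = ρf x (ρf y v)
          rw [happ, happ, happ, ← mul_smul,
            Algebra.TensorProduct.tmul_mul_tmul, mul_one]
        map_zero' := by
          apply LinearMap.ext; intro v
          rw [happ, TensorProduct.zero_tmul, zero_smul]; rfl
        map_add' := fun x y => by
          apply LinearMap.ext; intro v
          rw [LinearMap.add_apply, happ, happ, happ, TensorProduct.add_tmul, add_smul]
        commutes' := fun a => by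
          apply LinearMap.ext; intro v
          rw [Module.algebraMap_end_apply, happ, ← Algebra.TensorProduct.algebraMap_apply, hfull] }
    haveI : Nontrivial (Module.End Δ V) := by
      obtain ⟨v, hv⟩ := exists_ne (0 : V)
      refine ⟨1, 0, fun h => hv ?_⟩
      have := LinearMap.congr_fun h v
      simpa using this
    exact ⟨ρ, ρ.toRingHom.injective⟩
  have p1p2 : (∃ ρ : E →ₐ[F] Module.End Δ V, Function.Injective ρ) →
      (∃ inst : Module (E ⊗[F] Δ) V, ∀ (δ : Δ) (v : V),
      (letI := inst; ((1 : E) ⊗ₜ[F] δ) • v) = δ • v) := by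
    rintro ⟨ρ, -⟩
    let ρ' : E →ₐ[F] Module.End F V :=
      { toFun := fun x => (ρ x).restrictScalars F
        map_one' := LinearMap.ext fun v => by
          show (ρ 1) v = v
          rw [map_one]; rfl
        map_mul' := fun x y => LinearMap.ext fun v => by
          show (ρ (x * y)) v = (ρ x) ((ρ y) v)
          rw [map_mul]; rfl
        map_zero' := LinearMap.ext fun v => by
          show (ρ 0) v = 0
          rw [map_zero]; rfl
        map_add' := fun x y => LinearMap.ext fun v => by
          show (ρ (x + y)) v = (ρ x) v + (ρ y) v
          rw [map_add]; rfl
        commutes' := fun a => LinearMap.ext fun v => by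
          show (ρ (algebraMap F E a)) v = (algebraMap F (Module.End F V) a) v
          rw [AlgHom.commutes, Module.algebraMap_end_apply, Module.algebraMap_end_apply] }
    let φΔ : Δ →ₐ[F] Module.End F V :=
      { Module.toModuleEnd F (S := Δ) V with
        commutes' := fun a => LinearMap.ext fun v => by
          show (algebraMap F Δ a) • v = (algebraMap F (Module.End F V) a) v
          rw [algebraMap_smul, Module.algebraMap_end_apply] }
    have hcomm : ∀ (x : E) (δ : Δ), Commute (ρ' x) (φΔ δ) := by
      intro x δ
      apply LinearMap.ext; intro v
      show (ρ x) (δ • v) = δ • ((ρ x) v)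
      exact (ρ x).map_smul δ v
    let φ := Algebra.TensorProduct.lift ρ' φΔ hcomm
    refine ⟨Module.compHom V φ.toRingHom, fun δ v => ?_⟩
    show φ ((1:E) ⊗ₜ[F] δ) v = δ • v
    rw [Algebra.TensorProduct.lift_tmul, map_one, one_mul]
    rfl
  have p2p3 : (∃ inst : Module (E ⊗[F] Δ) V, ∀ (δ : Δ) (v : V),
      (letI := inst; ((1 : E) ⊗ₜ[F] δ) • v) = δ • v) →
      (∃ k : ℕ, 0 < k ∧ Module.finrank F V = k * (c * Module.finrank F Δ')) := by
    rintro ⟨inst, hcompat0⟩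
    letI := inst
    have hcompat : ∀ (δ : Δ) (v : V), ((1 : E) ⊗ₜ[F] δ) • v = δ • v := hcompat0
    have hfull : ∀ (a : F) (v : V), (algebraMap F (E ⊗[F] Δ) a) • v = a • v := by
      intro a v
      have h1 : (algebraMap F (E ⊗[F] Δ) a) = (1:E) ⊗ₜ[F] (algebraMap F Δ a) := by
        rw [Algebra.TensorProduct.algebraMap_apply, Algebra.algebraMap_eq_smul_one,
          TensorProduct.smul_tmul, ← Algebra.algebraMap_eq_smul_one]
      rw [h1, hcompat, algebraMap_smul]
    letI instB : Module (Matrix (Fin c) (Fin c) Δ') V :=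
      Module.compHom V (iso.symm : Matrix (Fin c) (Fin c) Δ' →ₐ[E] E ⊗[F] Δ).toRingHom
    have hBsmul : ∀ (b : Matrix (Fin c) (Fin c) Δ') (v : V), b • v = (iso.symm b) • v :=
      fun _ _ => rfl
    letI instD' : Module Δ' V :=
      Module.compHom V (Matrix.scalar (Fin c) : Δ' →+* Matrix (Fin c) (Fin c) Δ')
    have hDsmul : ∀ (x : Δ') (v : V), x • v = (Matrix.scalar (Fin c) x) • v := fun _ _ => rfl
    haveI htower : IsScalarTower F Δ' V := by
      constructor
      intro a x v
      rw [hDsmul, hBsmul, hDsmul, hBsmul]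
      have h1 : a • x = algebraMap F Δ' a * x := Algebra.smul_def a x
      have h2 : Matrix.scalar (Fin c) (algebraMap F Δ' a)
          = algebraMap F (Matrix (Fin c) (Fin c) Δ') a := by
        rw [Matrix.algebraMap_eq_diagonal]; rfl
      have h3 : iso.symm (algebraMap F (Matrix (Fin c) (Fin c) Δ') a)
          = algebraMap F (E ⊗[F] Δ) a := by
        rw [IsScalarTower.algebraMap_apply F E (Matrix (Fin c) (Fin c) Δ'),
          AlgEquiv.commutes, ← IsScalarTower.algebraMap_apply]
      rw [h1, map_mul, map_mul, mul_smul, h2, h3, hfull]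
    haveI : FiniteDimensional Δ' V := Module.Finite.of_restrictScalars_finite F Δ' V
    -- the Δ'-linear endomorphisms given by matrix units
    let Tmap : Fin c → Fin c → (V →ₗ[Δ'] V) := fun i j =>
      { toFun := fun v => (Matrix.single i j (1:Δ')) • v
        map_add' := fun u v => smul_add _ u v
        map_smul' := fun x v => by
          simp only [RingHom.id_apply]
          rw [hDsmul, hDsmul, smul_smul, smul_smul, stdB_mul_scalar] }
    have hT : ∀ (i j : Fin c) (v : V), Tmap i j v = (Matrix.single i j (1:Δ')) • v :=
      fun _ _ _ => rfl
    let i0 : Fin c := ⟨0, hc⟩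
    let W : Submodule Δ' V := LinearMap.range (Tmap i0 i0)
    have hmem : ∀ (i : Fin c) (v : V), Tmap i0 i v ∈ W := by
      intro i v
      refine ⟨Tmap i0 i v, ?_⟩
      show (Matrix.single i0 i0 (1:Δ')) • ((Matrix.single i0 i (1:Δ')) • v)
        = (Matrix.single i0 i (1:Δ')) • v
      rw [smul_smul, Matrix.single_mul_single_same, one_mul]
    have hW : ∀ w : W, (Matrix.single i0 i0 (1:Δ')) • (w : V) = (w : V) := by
      rintro ⟨w, u, hu⟩
      show (Matrix.single i0 i0 (1:Δ')) • w = w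
      rw [← hu]
      show (Matrix.single i0 i0 (1:Δ')) • ((Matrix.single i0 i0 (1:Δ')) • u)
        = (Matrix.single i0 i0 (1:Δ')) • u
      rw [smul_smul, Matrix.single_mul_single_same, one_mul]
    let f : V →ₗ[Δ'] (Fin c → W) :=
      LinearMap.pi (fun i => LinearMap.codRestrict W (Tmap i0 i) (hmem i))
    let g : (Fin c → W) →ₗ[Δ'] V :=
      ∑ i : Fin c, (Tmap i i0).comp (W.subtype.comp (LinearMap.proj i))
    have hg : ∀ w : Fin c → W, g w = ∑ i : Fin c, Tmap i i0 (w i : V) := by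
      intro w
      simp [g, LinearMap.sum_apply]
    have hgf : g.comp f = LinearMap.id := by
      apply LinearMap.ext; intro v
      rw [LinearMap.comp_apply, LinearMap.id_apply, hg]
      have h1 : ∀ i : Fin c, Tmap i i0 ((f v i : V)) = (Matrix.single i i (1:Δ')) • v := by
        intro i
        show (Matrix.single i i0 (1:Δ')) • ((Matrix.single i0 i (1:Δ')) • v)
          = (Matrix.single i i (1:Δ')) • v
        rw [smul_smul, Matrix.single_mul_single_same, one_mul]
      calc ∑ i : Fin c, Tmap i i0 ((f v i : V))
          = ∑ i : Fin c, (Matrix.single i i (1:Δ')) • v :=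
            Finset.sum_congr rfl (fun i _ => h1 i)
        _ = (∑ i : Fin c, Matrix.single i i (1:Δ')) • v := by
            rw [Finset.sum_smul]
        _ = v := by rw [sum_stdB_diag, one_smul]
    have hfg : f.comp g = LinearMap.id := by
      apply LinearMap.ext; intro w
      funext i
      apply Subtype.ext
      rw [LinearMap.comp_apply, LinearMap.id_apply]
      have h0 : ((f (g w) i : V)) = Tmap i0 i (g w) := rfl
      rw [h0, hg, map_sum]
      rw [Finset.sum_eq_single i]
      · show (Matrix.single i0 i (1:Δ')) • ((Matrix.single i i0 (1:Δ')) • (w i : V))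
          = (w i : V)
        rw [smul_smul, Matrix.single_mul_single_same, one_mul]
        exact hW (w i)
      · intro j _ hj
        show (Matrix.single i0 i (1:Δ')) • ((Matrix.single j i0 (1:Δ')) • (w j : V))
          = 0
        rw [smul_smul, Matrix.single_mul_single_of_ne (h := hj.symm), zero_smul]
      · intro h; exact absurd (Finset.mem_univ i) h
    let eqv : V ≃ₗ[Δ'] (Fin c → W) := LinearEquiv.ofLinear f g hfg hgf
    have hrank : Module.finrank Δ' V = c * Module.finrank Δ' W := by
      rw [eqv.finrank_eq, Module.finrank_pi_fintype, Finset.sum_const, Finset.card_univ,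
        Fintype.card_fin, smul_eq_mul]
    have hFV : Module.finrank F V = Module.finrank F Δ' * Module.finrank Δ' V :=
      (Module.finrank_mul_finrank F Δ' V).symm
    refine ⟨Module.finrank Δ' W, ?_, ?_⟩
    · rcases Nat.eq_zero_or_pos (Module.finrank Δ' W) with h | h
      · exfalso
        rw [hFV, hrank, h, mul_zero, mul_zero] at hVpos
        exact Nat.lt_irrefl 0 hVpos
      · exact h
    · rw [hFV, hrank]; ring
  have p3p2 : (∃ k : ℕ, 0 < k ∧ Module.finrank F V = k * (c * Module.finrank F Δ')) →
      (∃ inst : Module (E ⊗[F] Δ) V, ∀ (δ : Δ) (v : V),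
      (letI := inst; ((1 : E) ⊗ₜ[F] δ) • v) = δ • v) := by
    rintro ⟨k, -, hdim⟩
    letI m1 : Module (Matrix (Fin c) (Fin c) Δ') (Fin c → Δ') := mulVecModule
    letI m2 : Module (Matrix (Fin c) (Fin c) Δ') (Fin k → Fin c → Δ') :=
      Pi.module (Fin k) (fun _ => Fin c → Δ') (Matrix (Fin c) (Fin c) Δ')
    letI mA : Module (E ⊗[F] Δ) (Fin k → Fin c → Δ') :=
      Module.compHom _ (iso : (E ⊗[F] Δ) →ₐ[E] Matrix (Fin c) (Fin c) Δ').toRingHom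
    letI mD : Module Δ (Fin k → Fin c → Δ') :=
      Module.compHom _ (Algebra.TensorProduct.includeRight : Δ →ₐ[F] E ⊗[F] Δ).toRingHom
    have hDsmul : ∀ (δ : Δ) (m : Fin k → Fin c → Δ'),
        δ • m = (iso ((1:E) ⊗ₜ[F] δ)) • m := fun _ _ => rfl
    have hAsmul : ∀ (a : E ⊗[F] Δ) (m : Fin k → Fin c → Δ'), a • m = (iso a) • m :=
      fun _ _ => rfl
    -- F-scalar compatibility of the mulVec action
    have hFB : ∀ (a : F) (b : Matrix (Fin c) (Fin c) Δ') (m : Fin k → Fin c → Δ'),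
        (a • b) • m = a • (b • m) := by
      intro a b m
      funext i
      exact Matrix.smul_mulVec a b (m i)
    haveI htw : IsScalarTower F Δ (Fin k → Fin c → Δ') := by
      constructor
      intro a δ m
      rw [hDsmul, hDsmul]
      have h1 : (1:E) ⊗ₜ[F] (a • δ) = a • ((1:E) ⊗ₜ[F] δ) := TensorProduct.tmul_smul a 1 δ
      have h2 : iso (a • ((1:E) ⊗ₜ[F] δ)) = a • iso ((1:E) ⊗ₜ[F] δ) := by
        rw [← algebraMap_smul E a ((1:E) ⊗ₜ[F] δ), map_smul, algebraMap_smul]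
      rw [h1, h2, hFB]
    haveI : Module.Finite Δ (Fin k → Fin c → Δ') :=
      Module.Finite.of_restrictScalars_finite F Δ (Fin k → Fin c → Δ')
    have hFM : Module.finrank F (Fin k → Fin c → Δ') = k * (c * Module.finrank F Δ') := by
      rw [Module.finrank_pi_fintype F, Finset.sum_const, Finset.card_univ, Fintype.card_fin,
        smul_eq_mul]
      congr 1
      rw [Module.finrank_pi_fintype F, Finset.sum_const, Finset.card_univ, Fintype.card_fin,
        smul_eq_mul]
    have hΔM : Module.finrank Δ (Fin k → Fin c → Δ') = Module.finrank Δ V := by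
      have t1 : Module.finrank F Δ * Module.finrank Δ (Fin k → Fin c → Δ')
          = Module.finrank F Δ * Module.finrank Δ V := by
        rw [Module.finrank_mul_finrank F Δ (Fin k → Fin c → Δ'), hV, hFM, hdim]
      exact Nat.eq_of_mul_eq_mul_left hd t1
    let g : (Fin k → Fin c → Δ') ≃ₗ[Δ] V := LinearEquiv.ofFinrankEq _ _ hΔM
    letI instV : Module (E ⊗[F] Δ) V :=
      { smul := fun a v => g (a • g.symm v)
        one_smul := fun v => by show g ((1 : E ⊗[F] Δ) • g.symm v) = v
                                rw [one_smul, g.apply_symm_apply]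
        mul_smul := fun a b v => by
          show g ((a * b) • g.symm v) = g (a • g.symm (g (b • g.symm v)))
          rw [g.symm_apply_apply, mul_smul]
        smul_zero := fun a => by show g (a • g.symm 0) = 0
                                 rw [map_zero, smul_zero, map_zero]
        smul_add := fun a u v => by
          show g (a • g.symm (u + v)) = g (a • g.symm u) + g (a • g.symm v)
          rw [map_add, smul_add, map_add]
        add_smul := fun a b v => by
          show g ((a + b) • g.symm v) = g (a • g.symm v) + g (b • g.symm v)
          rw [add_smul, map_add]
        zero_smul := fun v => by show g ((0 : E ⊗[F] Δ) • g.symm v) = 0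
                                 rw [zero_smul, map_zero] }
    refine ⟨instV, fun δ v => ?_⟩
    show g (((1:E) ⊗ₜ[F] δ) • g.symm v) = δ • v
    have h1 : ((1:E) ⊗ₜ[F] δ) • (g.symm v) = δ • (g.symm v) := rfl
    rw [h1, g.map_smul, g.apply_symm_apply]
  exact ⟨⟨p1p2, p2p1⟩, ⟨p2p3, p3p2⟩, ⟨p3p4, p4p3⟩⟩
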